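/- For every positive integer m and every n ≥ 1, with p = 2m+1, the Lucas number L_{p^n} satisfies L_{(2m+1)^n} = ∏_{j=0}^{n-1} [1 + ∑_{k=0}^{m-1} L_{2(m-k)(2m+1)^j}]. -/

import Mathlib

/-- The Lucas numbers: L 0 = 2, L 1 = 1, L (n+2) = L n + L (n+1). -/
def lucas : ℕ → ℕ
  | 0 => 2
  | 1 => 1
  | n + 2 => lucas n + lucas (n + 1)

open goldenRatio in
lemma lucas_real : ∀ n : ℕ, (lucas n : ℝ) = φ ^ n + ψ ^ n := by
  intro n
  induction n using Nat.strong_induction_on with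
  | _ n ih =>
    match n with
    | 0 => simp [lucas]; norm_num
    | 1 => simp [lucas, Real.goldenRatio_add_goldenConj]
    | n + 2 =>
      have h1 := ih n (by omega)
      have h2 := ih (n + 1) (by omega)
      have g : φ ^ (n + 2) = φ ^ n * (φ + 1) := by rw [← Real.goldenRatio_sq]; ring
      have g' : ψ ^ (n + 2) = ψ ^ n * (ψ + 1) := by rw [← Real.goldenConj_sq]; ring
      show ((lucas n + lucas (n + 1) : ℕ) : ℝ) = _
      push_cast
      rw [h1, h2, g, g']
      ring

open goldenRatio in
lemma lucas_key (a b : ℕ) (hba : b ≤ a) (hb : Odd b) :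
    lucas (a + b) = lucas a * lucas b + lucas (a - b) := by
  have : (lucas (a + b) : ℝ) = (lucas a : ℝ) * lucas b + lucas (a - b) := by
    obtain ⟨c, rfl⟩ := Nat.exists_eq_add_of_le hba
    rw [lucas_real, lucas_real, lucas_real, lucas_real]
    have hc : b + c - b = c := by omega
    rw [hc]
    have hpow : (φ * ψ) ^ b = -1 := by rw [Real.goldenRatio_mul_goldenConj, hb.neg_one_pow]
    have e1 : b + c + b = c + b + b := by ring
    rw [e1, add_comm b c]
    have h2 : (φ ^ b * ψ ^ b) = -1 := by rw [← mul_pow]; exact hpow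
    simp only [pow_add]
    linear_combination (-(φ ^ c) - ψ ^ c) * h2
  exact_mod_cast this

lemma lucas_mul (m a : ℕ) (ha : Odd a) :
    lucas ((2 * m + 1) * a) =
      lucas a + ∑ k ∈ Finset.range m, lucas a * lucas (2 * (k + 1) * a) := by
  induction m with
  | zero => simp
  | succ m ih =>
    rw [Finset.sum_range_succ, ← add_assoc, ← ih]
    have ha1 : 1 ≤ a := ha.pos
    have key := lucas_key ((2 * (m + 1)) * a) a (by nlinarith) ha
    have e1 : 2 * (m + 1) * a + a = (2 * (m + 1) + 1) * a := by ring
    have e2 : 2 * (m + 1) * a - a = (2 * m + 1) * a := by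
      have : 2 * (m + 1) * a = (2 * m + 1) * a + a := by ring
      omega
    rw [e1, e2] at key
    rw [key]
    ring

lemma lucas_step (m a : ℕ) (ha : Odd a) :
    lucas ((2 * m + 1) * a) =
      lucas a * (1 + ∑ k ∈ Finset.range m, lucas (2 * (m - k) * a)) := by
  rw [lucas_mul m a ha, mul_add, mul_one, Finset.mul_sum]
  congr 1
  rw [← Finset.sum_range_reflect (fun k => lucas a * lucas (2 * (k + 1) * a)) m]
  apply Finset.sum_congr rfl
  intro k hk
  simp only [Finset.mem_range] at hk
  have : m - 1 - k + 1 = m - k := by omega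
  rw [this]

theorem stmt6 (m n : ℕ) (hm : 0 < m) (hn : 1 ≤ n) :
    lucas ((2 * m + 1) ^ n) =
      ∏ j ∈ Finset.range n,
        (1 + ∑ k ∈ Finset.range m, lucas (2 * (m - k) * (2 * m + 1) ^ j)) := by
  induction n with
  | zero => omega
  | succ n ih =>
    rcases Nat.eq_zero_or_pos n with rfl | hn'
    · have := lucas_step m 1 odd_one
      simp only [mul_one] at this
      simpa [lucas_step, pow_succ, lucas] using this
    · have hodd : Odd ((2 * m + 1) ^ n) := (odd_two_mul_add_one m).pow
      rw [Finset.prod_range_succ, ← ih hn', pow_succ, mul_comm ((2*m+1)^n) (2*m+1),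
        lucas_step m _ hodd]
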